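/- Covariance of weighted metrics under conditional embeddings: with notation as above (R a k×l stochastic partition matrix with indicator R̄, Q^{(a)} m×n stochastic partition matrices, ρ ∈ Δ_{k-1}°, ρ' = ρR assumed strictly positive), the conditional embedding f̄(K) = R̄^T(K ⊗ Q) satisfies f̄*(g^{ρ',n}) = g^{ρ,m}: for every k×m positive stochastic matrix K and tangent vectors u, v with zero row sums, g^{ρ',n}_{f̄(K)}(f̄_* u, f̄_* v) = sum_i ρ(i) sum_j u_{ij} v_{ij} / K_{ij}. -/

import Mathlib

/-- Covariance of weighted metrics under conditional embeddings. With
`R` a `k × l` stochastic partition matrix (indicator `R̄`, partition `part`), `Q⁽ᵃ⁾`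
`m × n` stochastic partition matrices, `ρ ∈ Δ_{k-1}°` and `ρ' = ρR` strictly positive,
the conditional embedding `f̄(K) = R̄ᵀ(K ⊗ Q)` satisfies `f̄*(g^{ρ',n}) = g^{ρ,m}`:
`∑_s ρ'(s) ∑_t (f̄_*u)_{st}(f̄_*v)_{st}/f̄(K)_{st} = ∑_i ρ(i) ∑_j u_{ij}v_{ij}/K_{ij}`,
where `(f̄_*u)_{st} = ∑_{a,b} R̄_{as} Q⁽ᵃ⁾_{bt} u_{ab}`. -/
theorem weighted_metric_covariant_under_conditional_embedding {k l m n : ℕ}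
    (R : Matrix (Fin k) (Fin l) ℝ) (part : Fin l → Fin k)
    (hR0 : ∀ a s, 0 ≤ R a s)
    (hRsupp : ∀ a s, R a s ≠ 0 → part s = a)
    (hRsum : ∀ a : Fin k,
      ∑ s ∈ Finset.univ.filter (fun s => part s = a), R a s = 1)
    (Q : Fin k → Matrix (Fin m) (Fin n) ℝ)
    (colpart : Fin k → Fin n → Fin m)
    (hQ0 : ∀ a b t, 0 ≤ Q a b t)
    (hQsupp : ∀ a b t, Q a b t ≠ 0 → colpart a t = b)
    (hQsum : ∀ a (b : Fin m),
      ∑ t ∈ Finset.univ.filter (fun t => colpart a t = b), Q a b t = 1)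
    (ρ : Fin k → ℝ) (hρ : ∀ a, 0 < ρ a) (hρ1 : ∑ a, ρ a = 1)
    (hρ' : ∀ s : Fin l, 0 < ∑ a, ρ a * R a s)
    (K : Matrix (Fin k) (Fin m) ℝ)
    (hKpos : ∀ a b, 0 < K a b) (hKrow : ∀ a, ∑ b, K a b = 1)
    (u v : Matrix (Fin k) (Fin m) ℝ)
    (hu : ∀ a, ∑ b, u a b = 0) (hv : ∀ a, ∑ b, v a b = 0) :
    ∑ s, (∑ a, ρ a * R a s) * ∑ t,
        (∑ a, ∑ b, (if part s = a then (1 : ℝ) else 0) * Q a b t * u a b)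
        * (∑ a, ∑ b, (if part s = a then (1 : ℝ) else 0) * Q a b t * v a b)
        / (∑ a, (if part s = a then (1 : ℝ) else 0) * ∑ b, K a b * Q a b t)
      = ∑ i, ρ i * ∑ j, u i j * v i j / K i j := by

  have key : ∀ s : Fin l,
      (∑ a, ρ a * R a s) * (∑ t,
        (∑ a, ∑ b, (if part s = a then (1 : ℝ) else 0) * Q a b t * u a b)
        * (∑ a, ∑ b, (if part s = a then (1 : ℝ) else 0) * Q a b t * v a b)
        / (∑ a, (if part s = a then (1 : ℝ) else 0) * ∑ b, K a b * Q a b t))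
      = ρ (part s) * R (part s) s * ∑ j, u (part s) j * v (part s) j / K (part s) j := by
    intro s
    have hρ's : (∑ a, ρ a * R a s) = ρ (part s) * R (part s) s := by
      refine Finset.sum_eq_single (part s) (fun a _ ha => ?_)
        (fun h => absurd (Finset.mem_univ _) h)
      rcases eq_or_ne (R a s) 0 with h | h
      · simp [h]
      · exact absurd (hRsupp a s h).symm ha
    have hred : ∀ (t : Fin n) (g : Matrix (Fin k) (Fin m) ℝ),
        ∑ a, ∑ b, (if part s = a then (1 : ℝ) else 0) * Q a b t * g a b
          = ∑ b, Q (part s) b t * g (part s) b := by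
      intro t g
      calc ∑ a, ∑ b, (if part s = a then (1 : ℝ) else 0) * Q a b t * g a b
          = ∑ a, (if part s = a then (1 : ℝ) else 0) * ∑ b, Q a b t * g a b := by
            simp [Finset.mul_sum, mul_assoc]
        _ = ∑ b, Q (part s) b t * g (part s) b := by
            simp [ite_mul, Finset.sum_ite_eq]
    have hden : ∀ t : Fin n,
        (∑ a, (if part s = a then (1 : ℝ) else 0) * ∑ b, K a b * Q a b t)
          = ∑ b, K (part s) b * Q (part s) b t := by
      intro t; simp [ite_mul, Finset.sum_ite_eq]
    have hterm : ∀ t : Fin n,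
        (∑ b, Q (part s) b t * u (part s) b) * (∑ b, Q (part s) b t * v (part s) b)
          / (∑ b, K (part s) b * Q (part s) b t)
        = Q (part s) (colpart (part s) t) t *
            (u (part s) (colpart (part s) t) * v (part s) (colpart (part s) t)
              / K (part s) (colpart (part s) t)) := by
      intro t
      set a := part s
      set b := colpart a t with hb
      have hsingle : ∀ w : Matrix (Fin k) (Fin m) ℝ,
          ∑ b', Q a b' t * w a b' = Q a b t * w a b := by
        intro w
        refine Finset.sum_eq_single b (fun b' _ hb' => ?_)
          (fun h => absurd (Finset.mem_univ _) h)
        rcases eq_or_ne (Q a b' t) 0 with h | h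
        · simp [h]
        · exact absurd (hQsupp a b' t h).symm hb'
      have hsingle' : ∑ b', K a b' * Q a b' t = K a b * Q a b t := by
        refine Finset.sum_eq_single b (fun b' _ hb' => ?_)
          (fun h => absurd (Finset.mem_univ _) h)
        rcases eq_or_ne (Q a b' t) 0 with h | h
        · simp [h]
        · exact absurd (hQsupp a b' t h).symm hb'
      rw [hsingle u, hsingle v, hsingle']
      rcases eq_or_ne (Q a b t) 0 with h | h
      · simp [h]
      · have hK := (hKpos a b).ne'
        field_simp
    have hsumT : ∑ t, Q (part s) (colpart (part s) t) t *
        (u (part s) (colpart (part s) t) * v (part s) (colpart (part s) t)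
          / K (part s) (colpart (part s) t))
        = ∑ j, u (part s) j * v (part s) j / K (part s) j := by
      rw [← Finset.sum_fiberwise Finset.univ (fun t => colpart (part s) t)]
      refine Finset.sum_congr rfl (fun j _ => ?_)
      have : ∀ t ∈ Finset.univ.filter (fun t => colpart (part s) t = j),
          Q (part s) (colpart (part s) t) t *
            (u (part s) (colpart (part s) t) * v (part s) (colpart (part s) t)
              / K (part s) (colpart (part s) t))
          = Q (part s) j t * (u (part s) j * v (part s) j / K (part s) j) := by
        intro t ht
        rw [Finset.mem_filter] at ht
        rw [ht.2]
      rw [Finset.sum_congr rfl this, ← Finset.sum_mul, hQsum]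
      ring
    rw [hρ's]
    congr 1
    calc (∑ t,
        (∑ a, ∑ b, (if part s = a then (1 : ℝ) else 0) * Q a b t * u a b)
        * (∑ a, ∑ b, (if part s = a then (1 : ℝ) else 0) * Q a b t * v a b)
        / (∑ a, (if part s = a then (1 : ℝ) else 0) * ∑ b, K a b * Q a b t))
        = ∑ t, (∑ b, Q (part s) b t * u (part s) b) * (∑ b, Q (part s) b t * v (part s) b)
            / (∑ b, K (part s) b * Q (part s) b t) := by
          refine Finset.sum_congr rfl (fun t _ => ?_)
          rw [hred t u, hred t v, hden t]
      _ = _ := by rw [Finset.sum_congr rfl (fun t _ => hterm t), hsumT]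
  rw [Finset.sum_congr rfl (fun s _ => key s),
    ← Finset.sum_fiberwise Finset.univ part]
  refine Finset.sum_congr rfl (fun a _ => ?_)
  have : ∀ s ∈ Finset.univ.filter (fun s => part s = a),
      ρ (part s) * R (part s) s * ∑ j, u (part s) j * v (part s) j / K (part s) j
        = ρ a * R a s * ∑ j, u a j * v a j / K a j := by
    intro s hs
    rw [Finset.mem_filter] at hs
    rw [hs.2]
  rw [Finset.sum_congr rfl this]
  have : ∑ s ∈ Finset.univ.filter (fun s => part s = a),
      ρ a * R a s * ∑ j, u a j * v a j / K a j
      = (∑ s ∈ Finset.univ.filter (fun s => part s = a), R a s)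
        * (ρ a * ∑ j, u a j * v a j / K a j) := by
    rw [Finset.sum_mul]
    exact Finset.sum_congr rfl (fun s _ => by ring)
  rw [this, hRsum]
  ring
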